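/- Consider the softmax map on R^{K+1}: for utilities u ∈ R^{K+1}, define σ_k(u) = exp(u_k)/Σ_{q=0}^K exp(u_q). Suppose u_k(t) = β_k + Σ_{ℓ=0}^K α_{kℓ} t_ℓ for t in the simplex Δ^K, with α_{0ℓ} = 0 for all ℓ. Let λ = (K/(K+1)) · max_{k,m,ℓ} |α_{kℓ} − α_{mℓ}|. Then the best-response map BR: Δ^K → Δ^K defined by BR(t) = σ(u(t)) is Lipschitz in the L^1 norm with constant λ: ||BR(t) − BR(t')||_1 ≤ λ ||t − t'||_1 for all t, t' ∈ Δ^K. -/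

import Mathlib

/-- The softmax best-response map with linear-in-probabilities payoffs is
Lipschitz in the L¹ norm on the simplex with constant
λ = (K/(K+1)) · max_{k,m,ℓ} |α_{kℓ} − α_{mℓ}|. -/
theorem softmax_lipschitz (K : ℕ)
    (β : Fin (K + 1) → ℝ) (α : Fin (K + 1) → Fin (K + 1) → ℝ)
    (hα0 : ∀ ℓ, α 0 ℓ = 0)
    (u : (Fin (K + 1) → ℝ) → Fin (K + 1) → ℝ)
    (hu : ∀ t k, u t k = β k + ∑ ℓ, α k ℓ * t ℓ)
    (BR : (Fin (K + 1) → ℝ) → Fin (K + 1) → ℝ)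
    (hBR : ∀ t k, BR t k = Real.exp (u t k) / ∑ q : Fin (K + 1), Real.exp (u t q))
    (lam : ℝ)
    (hlam : lam = (K : ℝ) / (K + 1) *
      Finset.univ.sup' Finset.univ_nonempty
        (fun p : Fin (K + 1) × Fin (K + 1) × Fin (K + 1) => |α p.1 p.2.2 - α p.2.1 p.2.2|))
    (t t' : Fin (K + 1) → ℝ)
    (ht : (∀ k, 0 ≤ t k) ∧ ∑ k, t k = 1)
    (ht' : (∀ k, 0 ≤ t' k) ∧ ∑ k, t' k = 1) :
    ∑ k, |BR t k - BR t' k| ≤ lam * ∑ ℓ, |t ℓ - t' ℓ| := by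
  classical
  set M : ℝ := Finset.univ.sup' Finset.univ_nonempty
      (fun p : Fin (K + 1) × Fin (K + 1) × Fin (K + 1) => |α p.1 p.2.2 - α p.2.1 p.2.2|)
    with hMdef
  have hMk : ∀ k m ℓ : Fin (K + 1), |α k ℓ - α m ℓ| ≤ M := fun k m ℓ =>
    Finset.le_sup' (f := fun p : Fin (K + 1) × Fin (K + 1) × Fin (K + 1) =>
      |α p.1 p.2.2 - α p.2.1 p.2.2|) (Finset.mem_univ (k, m, ℓ))
  have hM0 : 0 ≤ M := le_trans (abs_nonneg _) (hMk 0 0 0)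
  set d : Fin (K + 1) → ℝ := fun ℓ => t ℓ - t' ℓ with hddef
  have hd0 : 0 ≤ ∑ ℓ, |d ℓ| := Finset.sum_nonneg fun ℓ _ => abs_nonneg _
  set c : Fin (K + 1) → ℝ := fun k => ∑ ℓ, α k ℓ * d ℓ with hcdef
  set b : Fin (K + 1) → ℝ := fun k => β k + ∑ ℓ, α k ℓ * t' ℓ with hbdef
  -- bound on |c k - c m|
  have hcd : ∀ k m : Fin (K + 1), |c k - c m| ≤ M * ∑ ℓ, |d ℓ| := by
    intro k m
    have h1 : c k - c m = ∑ ℓ, (α k ℓ - α m ℓ) * d ℓ := by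
      simp [hcdef, sub_mul, Finset.sum_sub_distrib]
    rw [h1]
    calc |∑ ℓ, (α k ℓ - α m ℓ) * d ℓ| ≤ ∑ ℓ, |(α k ℓ - α m ℓ) * d ℓ| :=
          Finset.abs_sum_le_sum_abs _ _
      _ ≤ ∑ ℓ, M * |d ℓ| := by
          refine Finset.sum_le_sum fun ℓ _ => ?_
          rw [abs_mul]
          exact mul_le_mul_of_nonneg_right (hMk k m ℓ) (abs_nonneg _)
      _ = M * ∑ ℓ, |d ℓ| := by rw [Finset.mul_sum]
  -- sign vector
  set ε : Fin (K + 1) → ℝ := fun k => if 0 ≤ BR t k - BR t' k then 1 else -1 with hεdef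
  have hε1 : ∀ k, |ε k| = 1 := by
    intro k
    simp only [hεdef]
    split <;> simp
  have hεabs : ∀ k, ε k * (BR t k - BR t' k) = |BR t k - BR t' k| := by
    intro k
    simp only [hεdef]
    split
    next h => rw [abs_of_nonneg h, one_mul]
    next h => rw [abs_of_neg (not_le.mp h)]; ring
  -- functions along the segment
  set N : Fin (K + 1) → ℝ → ℝ := fun k s => Real.exp (b k + s * c k) with hNdef
  set S : ℝ → ℝ := fun s => ∑ q, N q s with hSdef
  have hSpos : ∀ s, 0 < S s := fun s =>
    Finset.sum_pos (fun q _ => Real.exp_pos _) Finset.univ_nonempty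
  set g : ℝ → ℝ := fun s => ∑ k, ε k * (N k s / S s) with hgdef
  -- BR along the segment equals N/S
  have huaff : ∀ (s : ℝ) (k), u (fun ℓ => t' ℓ + s * d ℓ) k = b k + s * c k := by
    intro s k
    have e : ∀ ℓ, α k ℓ * (t' ℓ + s * d ℓ) = α k ℓ * t' ℓ + s * (α k ℓ * d ℓ) :=
      fun ℓ => by ring
    rw [hu, Finset.sum_congr rfl fun ℓ _ => e ℓ, Finset.sum_add_distrib,
      ← Finset.mul_sum]
    simp only [hbdef, hcdef]
    ring
  have hBRp : ∀ (s : ℝ) (k), BR (fun ℓ => t' ℓ + s * d ℓ) k = N k s / S s := by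
    intro s k
    rw [hBR]
    simp only [huaff, hNdef, hSdef]
  -- endpoints
  have ht1 : (fun ℓ => t' ℓ + (1 : ℝ) * d ℓ) = t := by
    funext ℓ; simp [hddef]
  have ht0 : (fun ℓ => t' ℓ + (0 : ℝ) * d ℓ) = t' := by
    funext ℓ; simp
  have hg1 : g 1 - g 0 = ∑ k, |BR t k - BR t' k| := by
    simp only [hgdef]
    rw [← Finset.sum_sub_distrib]
    refine Finset.sum_congr rfl fun k _ => ?_
    rw [← hεabs k]
    have e1 : N k 1 / S 1 = BR t k := by rw [← hBRp 1 k, ht1]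
    have e0 : N k 0 / S 0 = BR t' k := by rw [← hBRp 0 k, ht0]
    rw [e1, e0]; ring
  -- derivatives
  have hN : ∀ (k) (s : ℝ), HasDerivAt (N k) (c k * N k s) s := by
    intro k s
    have h1 : HasDerivAt (fun s : ℝ => b k + s * c k) (c k) s := by
      simpa using ((hasDerivAt_id s).mul_const (c k)).const_add (b k)
    have := h1.exp
    simpa [hNdef, mul_comm] using this
  have hS : ∀ s : ℝ, HasDerivAt S (∑ q, c q * N q s) s := fun s =>
    HasDerivAt.fun_sum fun q _ => hN q s
  set D : ℝ → ℝ := fun s => ∑ k, ε k *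
      ((c k * N k s * S s - N k s * ∑ q, c q * N q s) / (S s) ^ 2) with hDdef
  have hg : ∀ s : ℝ, HasDerivAt g (D s) s := by
    intro s
    refine HasDerivAt.fun_sum fun k _ => ?_
    exact ((hN k s).div (hS s) (ne_of_gt (hSpos s))).const_mul (ε k)
  -- bound on |D s|
  have hDbound : ∀ s : ℝ, |D s| ≤ lam * ∑ ℓ, |d ℓ| := by
    intro s
    set σ : Fin (K + 1) → ℝ := fun k => N k s / S s with hσdef
    have hσ0 : ∀ k, 0 ≤ σ k := fun k =>
      div_nonneg (Real.exp_pos _).le (hSpos s).le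
    have hσ1 : ∑ q, σ q = 1 := by
      simp only [hσdef]
      rw [← Finset.sum_div]
      exact div_self (ne_of_gt (hSpos s))
    set B : ℝ := M * ∑ ℓ, |d ℓ| with hBdef
    have hB0 : 0 ≤ B := mul_nonneg hM0 hd0
    -- rewrite D s
    have hS0 : S s ≠ 0 := ne_of_gt (hSpos s)
    have hσsum : ∑ q, σ q * c q = (∑ q, c q * N q s) / S s := by
      rw [Finset.sum_div]
      refine Finset.sum_congr rfl fun q _ => ?_
      simp only [hσdef]
      ring
    have hD : D s = ∑ k, ε k * (σ k * (c k - ∑ q, σ q * c q)) := by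
      refine Finset.sum_congr rfl fun k _ => ?_
      rw [hσsum]
      simp only [hσdef]
      congr 1
      generalize hT : (∑ q, c q * N q s) = T
      generalize hA : N k s = A
      generalize hE : S s = E at hS0 ⊢
      field_simp
    have step1 : |D s| ≤ ∑ k, σ k * |c k - ∑ q, σ q * c q| := by
      rw [hD]
      refine le_trans (Finset.abs_sum_le_sum_abs _ _) (Finset.sum_le_sum fun k _ => ?_)
      rw [abs_mul, hε1, one_mul, abs_mul, abs_of_nonneg (hσ0 k)]
    have step2 : ∀ k, |c k - ∑ q, σ q * c q| ≤ ∑ q, σ q * |c k - c q| := by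
      intro k
      have : c k - ∑ q, σ q * c q = ∑ q, σ q * (c k - c q) := by
        simp only [mul_sub, Finset.sum_sub_distrib, ← Finset.sum_mul, hσ1, one_mul]
      rw [this]
      refine le_trans (Finset.abs_sum_le_sum_abs _ _) (Finset.sum_le_sum fun q _ => ?_)
      rw [abs_mul, abs_of_nonneg (hσ0 q)]
    have step3 : ∑ k, σ k * |c k - ∑ q, σ q * c q|
        ≤ ∑ k, ∑ q, σ k * (σ q * |c k - c q|) := by
      refine Finset.sum_le_sum fun k _ => ?_
      rw [← Finset.mul_sum]
      exact mul_le_mul_of_nonneg_left (step2 k) (hσ0 k)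
    have step4 : ∑ k, ∑ q, σ k * (σ q * |c k - c q|)
        ≤ B * ∑ k, ∑ q, (if k = q then 0 else σ k * σ q) := by
      rw [Finset.mul_sum]
      refine Finset.sum_le_sum fun k _ => ?_
      rw [Finset.mul_sum]
      refine Finset.sum_le_sum fun q _ => ?_
      by_cases h : k = q
      · simp [h]
      · rw [if_neg h, show B * (σ k * σ q) = σ k * (σ q * B) by ring]
        refine mul_le_mul_of_nonneg_left ?_ (hσ0 k)
        refine mul_le_mul_of_nonneg_left ?_ (hσ0 q)
        exact hcd k q
    have hsum : ∑ k, ∑ q, (if k = q then 0 else σ k * σ q) = 1 - ∑ q, σ q ^ 2 := by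
      have : ∀ k : Fin (K + 1), ∑ q, (if k = q then 0 else σ k * σ q)
          = σ k * 1 - σ k ^ 2 := by
        intro k
        have h1 : ∀ q : Fin (K + 1), (if k = q then 0 else σ k * σ q)
            = σ k * σ q - (if k = q then σ k * σ q else 0) := by
          intro q; by_cases h : k = q <;> simp [h]
        rw [Finset.sum_congr rfl fun q _ => h1 q, Finset.sum_sub_distrib,
          Finset.sum_ite_eq Finset.univ k (fun q => σ k * σ q)]
        simp [← Finset.mul_sum, hσ1, sq]
      rw [Finset.sum_congr rfl fun k _ => this k, Finset.sum_sub_distrib,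
        ← Finset.sum_mul, hσ1]
      ring
    have hCS : 1 ≤ (K + 1 : ℝ) * ∑ q, σ q ^ 2 := by
      have := sq_sum_le_card_mul_sum_sq (s := (Finset.univ : Finset (Fin (K + 1))))
        (f := σ)
      rw [hσ1] at this
      simpa using this
    have hfrac : 1 - ∑ q, σ q ^ 2 ≤ (K : ℝ) / (K + 1) := by
      have hK : (0 : ℝ) < (K : ℝ) + 1 := by positivity
      rw [le_div_iff₀ hK]
      nlinarith [hCS]
    calc |D s| ≤ B * ∑ k, ∑ q, (if k = q then 0 else σ k * σ q) :=
          le_trans step1 (le_trans step3 step4)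
      _ = B * (1 - ∑ q, σ q ^ 2) := by rw [hsum]
      _ ≤ B * ((K : ℝ) / (K + 1)) :=
          mul_le_mul_of_nonneg_left hfrac hB0
      _ = lam * ∑ ℓ, |d ℓ| := by rw [hlam, hBdef]; ring
  -- mean value theorem
  obtain ⟨x, _, hx⟩ := exists_hasDerivAt_eq_slope g D (by norm_num : (0:ℝ) < 1)
    (fun y _ => (hg y).continuousAt.continuousWithinAt) (fun y _ => hg y)
  have hgd : g 1 - g 0 = D x := by
    rw [hx]; norm_num
  calc ∑ k, |BR t k - BR t' k| = g 1 - g 0 := hg1.symm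
    _ = D x := hgd
    _ ≤ |D x| := le_abs_self _
    _ ≤ lam * ∑ ℓ, |d ℓ| := hDbound x
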